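/- Let A be the Cartan matrix of the affine Lie algebra D_ℓ^{(1)} (ℓ ≥ 5 odd), as in type D_ℓ^{(1)} (nodes 0 and 1 both attached to node 2; nodes ℓ-1 and ℓ both attached to node ℓ-2; nodes 2,…,ℓ-2 forming a path). A vector ψ ∈ ℤ^{ℓ+1} satisfying ψ_0 + ψ_1 + 2(ψ_2 + ⋯ + ψ_{ℓ-2}) + ψ_{ℓ-1} + ψ_ℓ = 0 lies in the ℤ-span of the columns of A if and only if ψ_0 - ψ_1 + 2ψ_2 + 2ψ_4 + 2ψ_6 + ⋯ + 2ψ_{ℓ-1} ≡ 0 (mod 4). -/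

import Mathlib

open Finset


private def Cc (ℓ i j : ℕ) : ℤ :=
  if i = j then 2
  else if (i = 0 ∧ j = 2) ∨ (j = 0 ∧ i = 2)
       ∨ (i = 1 ∧ j = 2) ∨ (j = 1 ∧ i = 2)
       ∨ (2 ≤ i ∧ i + 1 = j ∧ j ≤ ℓ - 2)
       ∨ (2 ≤ j ∧ j + 1 = i ∧ i ≤ ℓ - 2)
       ∨ (i = ℓ - 2 ∧ j = ℓ - 1) ∨ (j = ℓ - 2 ∧ i = ℓ - 1)
       ∨ (i = ℓ - 2 ∧ j = ℓ) ∨ (j = ℓ - 2 ∧ i = ℓ) then -1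
  else 0

private lemma rsgen (ℓ i : ℕ) (w : ℕ → ℤ) (T : Finset ℕ)
    (hsub : ∀ k ∈ T, k < ℓ + 1)
    (hz : ∀ k, k < ℓ + 1 → k ∉ T → Cc ℓ i k = 0) :
    ∑ k ∈ range (ℓ + 1), Cc ℓ i k * w k = ∑ k ∈ T, Cc ℓ i k * w k := by
  refine (Finset.sum_subset (fun k hk => mem_range.mpr (hsub k hk)) ?_).symm
  intro k hk hnk
  rw [hz k (mem_range.mp hk) hnk, zero_mul]

private lemma rs0 (ℓ : ℕ) (hℓ : 5 ≤ ℓ) (h2 : ℓ % 2 = 1) (w : ℕ → ℤ) :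
    ∑ k ∈ range (ℓ + 1), Cc ℓ 0 k * w k = 2 * w 0 - w 2 := by
  rw [rsgen ℓ 0 w {0, 2} (by intro k hk; simp only [mem_insert, mem_singleton] at hk; omega)
      (by intro k hk hnk; simp only [mem_insert, mem_singleton] at hnk
          unfold Cc; rw [if_neg (by omega), if_neg (by omega)])]
  rw [Finset.sum_pair (by omega : (0:ℕ) ≠ 2)]
  rw [show Cc ℓ 0 0 = 2 from by unfold Cc; rw [if_pos rfl]]
  rw [show Cc ℓ 0 2 = -1 from by unfold Cc; rw [if_neg (by omega), if_pos (by omega)]]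
  ring

private lemma rs1 (ℓ : ℕ) (hℓ : 5 ≤ ℓ) (h2 : ℓ % 2 = 1) (w : ℕ → ℤ) :
    ∑ k ∈ range (ℓ + 1), Cc ℓ 1 k * w k = 2 * w 1 - w 2 := by
  rw [rsgen ℓ 1 w {1, 2} (by intro k hk; simp only [mem_insert, mem_singleton] at hk; omega)
      (by intro k hk hnk; simp only [mem_insert, mem_singleton] at hnk
          unfold Cc; rw [if_neg (by omega), if_neg (by omega)])]
  rw [Finset.sum_pair (by omega : (1:ℕ) ≠ 2)]
  rw [show Cc ℓ 1 1 = 2 from by unfold Cc; rw [if_pos rfl]]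
  rw [show Cc ℓ 1 2 = -1 from by unfold Cc; rw [if_neg (by omega), if_pos (by omega)]]
  ring

private lemma rs2 (ℓ : ℕ) (hℓ : 5 ≤ ℓ) (h2 : ℓ % 2 = 1) (w : ℕ → ℤ) :
    ∑ k ∈ range (ℓ + 1), Cc ℓ 2 k * w k = -w 0 - w 1 + 2 * w 2 - w 3 := by
  rw [rsgen ℓ 2 w {0, 1, 2, 3} (by intro k hk; simp only [mem_insert, mem_singleton] at hk; omega)
      (by intro k hk hnk; simp only [mem_insert, mem_singleton] at hnk
          unfold Cc; rw [if_neg (by omega), if_neg (by omega)])]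
  rw [show ({0,1,2,3} : Finset ℕ) = insert 0 (insert 1 {2,3}) from rfl]
  rw [Finset.sum_insert (by simp only [mem_insert, mem_singleton]; omega),
      Finset.sum_insert (by simp only [mem_insert, mem_singleton]; omega),
      Finset.sum_pair (by omega : (2:ℕ) ≠ 3)]
  rw [show Cc ℓ 2 0 = -1 from by unfold Cc; rw [if_neg (by omega), if_pos (by omega)]]
  rw [show Cc ℓ 2 1 = -1 from by unfold Cc; rw [if_neg (by omega), if_pos (by omega)]]
  rw [show Cc ℓ 2 2 = 2 from by unfold Cc; rw [if_pos rfl]]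
  rw [show Cc ℓ 2 3 = -1 from by unfold Cc; rw [if_neg (by omega), if_pos (by omega)]]
  ring

private lemma rsmid (ℓ : ℕ) (hℓ : 5 ≤ ℓ) (h2 : ℓ % 2 = 1) (w : ℕ → ℤ)
    (j : ℕ) (hj3 : 3 ≤ j) (hjl : j ≤ ℓ - 3) :
    ∑ k ∈ range (ℓ + 1), Cc ℓ j k * w k = -w (j-1) + 2 * w j - w (j+1) := by
  rw [rsgen ℓ j w {j-1, j, j+1} (by intro k hk; simp only [mem_insert, mem_singleton] at hk; omega)
      (by intro k hk hnk; simp only [mem_insert, mem_singleton] at hnk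
          unfold Cc; rw [if_neg (by omega), if_neg (by omega)])]
  rw [show ({j-1, j, j+1} : Finset ℕ) = insert (j-1) {j, j+1} from rfl]
  rw [Finset.sum_insert (by simp only [mem_insert, mem_singleton]; omega),
      Finset.sum_pair (by omega : j ≠ j + 1)]
  rw [show Cc ℓ j (j-1) = -1 from by unfold Cc; rw [if_neg (by omega), if_pos (by omega)]]
  rw [show Cc ℓ j j = 2 from by unfold Cc; rw [if_pos rfl]]
  rw [show Cc ℓ j (j+1) = -1 from by unfold Cc; rw [if_neg (by omega), if_pos (by omega)]]
  ring

private lemma rsm (ℓ : ℕ) (hℓ : 5 ≤ ℓ) (h2 : ℓ % 2 = 1) (w : ℕ → ℤ) :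
    ∑ k ∈ range (ℓ + 1), Cc ℓ (ℓ-2) k * w k = -w (ℓ-3) + 2 * w (ℓ-2) - w (ℓ-1) - w ℓ := by
  rw [rsgen ℓ (ℓ-2) w {ℓ-3, ℓ-2, ℓ-1, ℓ}
      (by intro k hk; simp only [mem_insert, mem_singleton] at hk; omega)
      (by intro k hk hnk; simp only [mem_insert, mem_singleton] at hnk
          unfold Cc; rw [if_neg (by omega), if_neg (by omega)])]
  rw [show ({ℓ-3, ℓ-2, ℓ-1, ℓ} : Finset ℕ) = insert (ℓ-3) (insert (ℓ-2) {ℓ-1, ℓ}) from rfl]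
  rw [Finset.sum_insert (by simp only [mem_insert, mem_singleton]; omega),
      Finset.sum_insert (by simp only [mem_insert, mem_singleton]; omega),
      Finset.sum_pair (by omega : ℓ - 1 ≠ ℓ)]
  rw [show Cc ℓ (ℓ-2) (ℓ-3) = -1 from by unfold Cc; rw [if_neg (by omega), if_pos (by omega)]]
  rw [show Cc ℓ (ℓ-2) (ℓ-2) = 2 from by unfold Cc; rw [if_pos rfl]]
  rw [show Cc ℓ (ℓ-2) (ℓ-1) = -1 from by unfold Cc; rw [if_neg (by omega), if_pos (by omega)]]
  rw [show Cc ℓ (ℓ-2) ℓ = -1 from by unfold Cc; rw [if_neg (by omega), if_pos (by omega)]]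
  ring

private lemma rsl1 (ℓ : ℕ) (hℓ : 5 ≤ ℓ) (h2 : ℓ % 2 = 1) (w : ℕ → ℤ) :
    ∑ k ∈ range (ℓ + 1), Cc ℓ (ℓ-1) k * w k = -w (ℓ-2) + 2 * w (ℓ-1) := by
  rw [rsgen ℓ (ℓ-1) w {ℓ-2, ℓ-1}
      (by intro k hk; simp only [mem_insert, mem_singleton] at hk; omega)
      (by intro k hk hnk; simp only [mem_insert, mem_singleton] at hnk
          unfold Cc; rw [if_neg (by omega), if_neg (by omega)])]
  rw [Finset.sum_pair (by omega : ℓ - 2 ≠ ℓ - 1)]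
  rw [show Cc ℓ (ℓ-1) (ℓ-2) = -1 from by unfold Cc; rw [if_neg (by omega), if_pos (by omega)]]
  rw [show Cc ℓ (ℓ-1) (ℓ-1) = 2 from by unfold Cc; rw [if_pos rfl]]
  ring

private lemma rsl (ℓ : ℕ) (hℓ : 5 ≤ ℓ) (h2 : ℓ % 2 = 1) (w : ℕ → ℤ) :
    ∑ k ∈ range (ℓ + 1), Cc ℓ ℓ k * w k = -w (ℓ-2) + 2 * w ℓ := by
  rw [rsgen ℓ ℓ w {ℓ-2, ℓ}
      (by intro k hk; simp only [mem_insert, mem_singleton] at hk; omega)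
      (by intro k hk hnk; simp only [mem_insert, mem_singleton] at hnk
          unfold Cc; rw [if_neg (by omega), if_neg (by omega)])]
  rw [Finset.sum_pair (by omega : ℓ - 2 ≠ ℓ)]
  rw [show Cc ℓ ℓ (ℓ-2) = -1 from by unfold Cc; rw [if_neg (by omega), if_pos (by omega)]]
  rw [show Cc ℓ ℓ ℓ = 2 from by unfold Cc; rw [if_pos rfl]]
  ring


private lemma key1 (ℓ : ℕ) (p : ℕ → ℤ) (a : ℕ) (ha : a ≤ ℓ - 2) :
    ∑ k ∈ Icc a (ℓ-2), ((k:ℤ) - (a:ℤ) + 1) * p k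
      = p a + (∑ k ∈ Icc (a+1) (ℓ-2), ((k:ℤ) - (a:ℤ)) * p k)
        + ∑ k ∈ Icc (a+1) (ℓ-2), p k := by
  rw [show Icc a (ℓ-2) = insert a (Icc (a+1) (ℓ-2)) from by
        ext k; simp only [mem_insert, mem_Icc]; omega,
      Finset.sum_insert (by simp only [mem_Icc]; omega)]
  have h1 : ∑ k ∈ Icc (a+1) (ℓ-2), ((k:ℤ) - (a:ℤ) + 1) * p k
      = (∑ k ∈ Icc (a+1) (ℓ-2), ((k:ℤ) - (a:ℤ)) * p k) + ∑ k ∈ Icc (a+1) (ℓ-2), p k := by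
    rw [← Finset.sum_add_distrib]; exact Finset.sum_congr rfl fun k _ => by ring
  rw [h1]; ring

private lemma key2 (ℓ : ℕ) (p : ℕ → ℤ) (a : ℕ) :
    ∑ k ∈ Icc (a+2) (ℓ-2), ((k:ℤ) - (a:ℤ) - 1) * p k
      = (∑ k ∈ Icc (a+1) (ℓ-2), ((k:ℤ) - (a:ℤ)) * p k) - ∑ k ∈ Icc (a+1) (ℓ-2), p k := by
  have h1 : (∑ k ∈ Icc (a+1) (ℓ-2), ((k:ℤ) - (a:ℤ)) * p k) - ∑ k ∈ Icc (a+1) (ℓ-2), p k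
      = ∑ k ∈ Icc (a+1) (ℓ-2), ((k:ℤ) - (a:ℤ) - 1) * p k := by
    rw [← Finset.sum_sub_distrib]; exact Finset.sum_congr rfl fun k _ => by ring
  rw [h1]
  rcases le_or_gt (a+1) (ℓ-2) with h | h
  · rw [show Icc (a+1) (ℓ-2) = insert (a+1) (Icc (a+2) (ℓ-2)) from by
        ext k; simp only [mem_insert, mem_Icc]; omega,
      Finset.sum_insert (by simp only [mem_Icc]; omega)]
    have hz : (((a+1:ℕ)):ℤ) - (a:ℤ) - 1 = 0 := by push_cast; ring
    rw [hz, zero_mul, zero_add]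
  · rw [Finset.Icc_eq_empty (by omega : ¬ a+2 ≤ ℓ-2), Finset.Icc_eq_empty (by omega : ¬ a+1 ≤ ℓ-2)]

private lemma solve (ℓ : ℕ) (hℓ : 5 ≤ ℓ) (h2 : ℓ % 2 = 1) (p : ℕ → ℤ)
    (hlev : p 0 + p 1 + 2 * (∑ k ∈ Icc 2 (ℓ - 2), p k) + p (ℓ - 1) + p ℓ = 0)
    (hmod : 4 ∣ p 0 - p 1 + 2 * ∑ k ∈ (Icc 2 (ℓ - 1)).filter (fun k => k % 2 = 0), p k) :
    ∃ x : ℕ → ℤ,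
      2 * x 0 - x 2 = p 0 ∧
      2 * x 1 - x 2 = p 1 ∧
      -x 0 - x 1 + 2 * x 2 - x 3 = p 2 ∧
      (∀ j, 3 ≤ j → j ≤ ℓ - 3 → -x (j - 1) + 2 * x j - x (j + 1) = p j) ∧
      -x (ℓ - 3) + 2 * x (ℓ - 2) - x (ℓ - 1) - x ℓ = p (ℓ - 2) ∧
      -x (ℓ - 2) + 2 * x (ℓ - 1) = p (ℓ - 1) ∧
      -x (ℓ - 2) + 2 * x ℓ = p ℓ := by
  obtain ⟨c, hc⟩ := hmod
  obtain ⟨r, hr⟩ : ∃ r, ℓ = 2*r + 1 := ⟨ℓ/2, by omega⟩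
  have hcl : (ℓ:ℤ) = 2*(r:ℤ) + 1 := by omega
  -- abbreviations
  set E := ∑ k ∈ (Icc 2 (ℓ-2)).filter (fun k => k % 2 = 0), p k with hE
  set O := ∑ k ∈ (Icc 2 (ℓ-2)).filter (fun k => ¬ k % 2 = 0), p k with hO
  set T2 := ∑ k ∈ Icc 3 (ℓ-2), p k with hT2
  set S2 := ∑ k ∈ Icc 3 (ℓ-2), ((k:ℤ) - 2) * p k with hS2
  set S3 := ∑ k ∈ Icc 4 (ℓ-2), ((k:ℤ) - 3) * p k with hS3
  have hEO : ∑ k ∈ Icc 2 (ℓ-2), p k = E + O := (Finset.sum_filter_add_sum_filter_not _ _ _).symm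
  have hM : ∑ k ∈ (Icc 2 (ℓ-1)).filter (fun k => k % 2 = 0), p k = p (ℓ-1) + E := by
    rw [show (Icc 2 (ℓ-1)).filter (fun k => k % 2 = 0)
        = insert (ℓ-1) ((Icc 2 (ℓ-2)).filter (fun k => k % 2 = 0)) from by
      ext k; simp only [mem_filter, mem_Icc, mem_insert]; omega]
    exact Finset.sum_insert (by simp only [mem_filter, mem_Icc]; omega)
  rw [hM] at hc
  have hlev2 : p 0 + p 1 + 2 * (p 2 + T2) + p (ℓ-1) + p ℓ = 0 := by
    rw [← hlev, show Icc 2 (ℓ-2) = insert 2 (Icc 3 (ℓ-2)) from by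
        ext k; simp only [mem_insert, mem_Icc]; omega,
      Finset.sum_insert (by simp only [mem_Icc]; omega)]
  rw [hEO] at hlev
  -- parity facts
  obtain ⟨d, hd⟩ : ∃ d, p (ℓ-1) - p ℓ = 2 * d := ⟨(p (ℓ-1) - p ℓ)/2, by omega⟩
  obtain ⟨w0, hw0⟩ : ∃ w0, p 0 + d + O = 2 * w0 := ⟨(p 0 + d + O)/2, by omega⟩
  obtain ⟨w1, hw1⟩ : ∃ w1, p 1 + d + O = 2 * w1 := ⟨(p 1 + d + O)/2, by omega⟩
  -- parity of S2 - O
  have hOO : O = ∑ k ∈ (Icc 3 (ℓ-2)).filter (fun k => ¬ k % 2 = 0), p k := by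
    rw [hO]
    exact Finset.sum_congr (by ext k; simp only [mem_filter, mem_Icc]; omega) (fun _ _ => rfl)
  have hS2split : S2 = (∑ k ∈ (Icc 3 (ℓ-2)).filter (fun k => k % 2 = 0), ((k:ℤ) - 2) * p k)
      + ∑ k ∈ (Icc 3 (ℓ-2)).filter (fun k => ¬ k % 2 = 0), ((k:ℤ) - 2) * p k :=
    (Finset.sum_filter_add_sum_filter_not _ _ _).symm
  obtain ⟨u1, hu1⟩ : (2:ℤ) ∣ ∑ k ∈ (Icc 3 (ℓ-2)).filter (fun k => k % 2 = 0), ((k:ℤ) - 2) * p k :=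
    Finset.dvd_sum fun k hk => dvd_mul_of_dvd_left
      (by simp only [mem_filter, mem_Icc] at hk; omega) _
  obtain ⟨u2, hu2⟩ : (2:ℤ) ∣ ((∑ k ∈ (Icc 3 (ℓ-2)).filter (fun k => ¬ k % 2 = 0), ((k:ℤ) - 2) * p k)
      - ∑ k ∈ (Icc 3 (ℓ-2)).filter (fun k => ¬ k % 2 = 0), p k) := by
    rw [← Finset.sum_sub_distrib]
    refine Finset.dvd_sum fun k hk => ?_
    simp only [mem_filter, mem_Icc] at hk
    rw [show ((k:ℤ) - 2) * p k - p k = ((k:ℤ) - 3) * p k from by ring]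
    exact dvd_mul_of_dvd_left (by omega) _
  have hu : S2 - O = 2 * (u1 + u2) := by rw [hOO]; omega
  -- the solution vector
  set e0 : ℤ := w0 + (1 - (r:ℤ)) * (p ℓ + d) - (u1 + u2) - O with he0d
  set e1 : ℤ := w1 + (1 - (r:ℤ)) * (p ℓ + d) - (u1 + u2) - O with he1d
  set x : ℕ → ℤ := fun j =>
    if j = 0 then e0 else if j = 1 then e1
    else if j ≤ ℓ-2 then ((j:ℤ) + 1 - (ℓ:ℤ)) * p ℓ + ((j:ℤ) + 2 - (ℓ:ℤ)) * d
        - ∑ k ∈ Icc (j+1) (ℓ-2), ((k:ℤ) - (j:ℤ)) * p k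
    else if j = ℓ-1 then d else 0 with hxd
  have hx0 : x 0 = e0 := by simp only [hxd]; norm_num
  have hx1 : x 1 = e1 := by simp only [hxd]; norm_num
  have hxm : ∀ j, 2 ≤ j → j ≤ ℓ-2 → x j = ((j:ℤ) + 1 - (ℓ:ℤ)) * p ℓ + ((j:ℤ) + 2 - (ℓ:ℤ)) * d
      - ∑ k ∈ Icc (j+1) (ℓ-2), ((k:ℤ) - (j:ℤ)) * p k := by
    intro j hj1 hj2
    simp only [hxd]
    rw [if_neg (by omega), if_neg (by omega), if_pos (by omega)]
  have hxl1 : x (ℓ-1) = d := by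
    simp only [hxd]
    rw [if_neg (by omega), if_neg (by omega), if_neg (by omega)]
    simp
  have hxl : x ℓ = 0 := by
    simp only [hxd]
    rw [if_neg (by omega), if_neg (by omega), if_neg (by omega), if_neg (by omega)]
  have hx2v : x 2 = (3 - (ℓ:ℤ)) * p ℓ + (4 - (ℓ:ℤ)) * d - S2 := by
    rw [hxm 2 (by omega) (by omega), hS2]
    norm_num
  have hx3v : x 3 = (4 - (ℓ:ℤ)) * p ℓ + (5 - (ℓ:ℤ)) * d - S3 := by
    rw [hxm 3 (by omega) (by omega), hS3]
    norm_num
  have hkey23 : S3 = S2 - T2 := by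
    have h := key2 ℓ p 2
    rw [show (2:ℕ)+2 = 4 from rfl, show (2:ℕ)+1 = 3 from rfl] at h
    rw [hS3, hS2, hT2]
    rw [show (∑ k ∈ Icc 4 (ℓ-2), ((k:ℤ) - 3) * p k)
        = ∑ k ∈ Icc 4 (ℓ-2), ((k:ℤ) - ((2:ℕ):ℤ) - 1) * p k from
      Finset.sum_congr rfl fun k _ => by push_cast; ring]
    rw [h]
    norm_num
  have he0 : 2 * e0 = p 0 + x 2 := by
    rw [hx2v]
    linear_combination 2*he0d - hw0 + hu + (p ℓ + d) * hcl
  have he1 : 2 * e1 = p 1 + x 2 := by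
    rw [hx2v]
    linear_combination 2*he1d - hw1 + hu + (p ℓ + d) * hcl
  refine ⟨x, ?_, ?_, ?_, ?_, ?_, ?_, ?_⟩
  · rw [hx0]; omega
  · rw [hx1]; omega
  · have hG2 : 2*(-e0 - e1 + 2*x 2 - x 3) = 2 * p 2 := by
      linear_combination -he0 - he1 + 2*hx2v - 2*hx3v + 2*hkey23 - hlev2 + hd
    rw [hx0, hx1]; omega
  · intro j h3 hl3
    rw [hxm (j-1) (by omega) (by omega), hxm j (by omega) (by omega),
        hxm (j+1) (by omega) (by omega)]
    rw [show j-1+1 = j from by omega]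
    rw [show ((j-1:ℕ):ℤ) = (j:ℤ) - 1 from by omega]
    rw [show ((j+1:ℕ):ℤ) = (j:ℤ) + 1 from by push_cast; ring]
    rw [show (∑ k ∈ Icc j (ℓ-2), ((k:ℤ) - ((j:ℤ) - 1)) * p k)
        = ∑ k ∈ Icc j (ℓ-2), ((k:ℤ) - (j:ℤ) + 1) * p k from
      Finset.sum_congr rfl fun k _ => by ring]
    rw [show (∑ k ∈ Icc (j+1+1) (ℓ-2), ((k:ℤ) - ((j:ℤ) + 1)) * p k)
        = ∑ k ∈ Icc (j+2) (ℓ-2), ((k:ℤ) - (j:ℤ) - 1) * p k from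
      Finset.sum_congr rfl fun k _ => by ring]
    linear_combination key1 ℓ p j (by omega) + key2 ℓ p j
  · rw [hxm (ℓ-3) (by omega) (by omega), hxm (ℓ-2) (by omega) (by omega), hxl1, hxl]
    rw [show ℓ-3+1 = ℓ-2 from by omega]
    rw [Finset.Icc_eq_empty (by omega : ¬ ℓ-2+1 ≤ ℓ-2), Finset.sum_empty]
    rw [Finset.Icc_self, Finset.sum_singleton]
    rw [show ((ℓ-3:ℕ):ℤ) = (ℓ:ℤ) - 3 from by omega,
        show ((ℓ-2:ℕ):ℤ) = (ℓ:ℤ) - 2 from by omega]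
    ring
  · rw [hxm (ℓ-2) (by omega) (by omega), hxl1]
    rw [Finset.Icc_eq_empty (by omega : ¬ ℓ-2+1 ≤ ℓ-2), Finset.sum_empty]
    rw [show ((ℓ-2:ℕ):ℤ) = (ℓ:ℤ) - 2 from by omega]
    linear_combination -hd
  · rw [hxm (ℓ-2) (by omega) (by omega), hxl]
    rw [Finset.Icc_eq_empty (by omega : ¬ ℓ-2+1 ≤ ℓ-2), Finset.sum_empty]
    rw [show ((ℓ-2:ℕ):ℤ) = (ℓ:ℤ) - 2 from by omega]
    ring

private lemma fwd (ℓ : ℕ) (hℓ : 5 ≤ ℓ) (h2 : ℓ % 2 = 1) (p x : ℕ → ℤ)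
    (e0 : 2 * x 0 - x 2 = p 0) (e1 : 2 * x 1 - x 2 = p 1)
    (e2 : -x 0 - x 1 + 2 * x 2 - x 3 = p 2)
    (emid : ∀ j, 3 ≤ j → j ≤ ℓ - 3 → -x (j-1) + 2 * x j - x (j+1) = p j)
    (el1 : -x (ℓ-2) + 2 * x (ℓ-1) = p (ℓ-1)) :
    4 ∣ p 0 - p 1 + 2 * ∑ k ∈ (Icc 2 (ℓ-1)).filter (fun k => k % 2 = 0), p k := by
  have hsetM : (Icc 2 (ℓ-1)).filter (fun k => k % 2 = 0)
      = insert 2 (insert (ℓ-1) ((Icc 4 (ℓ-3)).filter (fun k => k % 2 = 0))) := by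
    ext k; simp only [mem_filter, mem_Icc, mem_insert]; omega
  rw [hsetM, Finset.sum_insert (by simp only [mem_insert, mem_filter, mem_Icc]; omega),
      Finset.sum_insert (by simp only [mem_filter, mem_Icc]; omega)]
  have hSm : ∑ k ∈ (Icc 4 (ℓ-3)).filter (fun k => k % 2 = 0), p k
      = -(∑ k ∈ (Icc 4 (ℓ-3)).filter (fun k => k % 2 = 0), x (k-1))
        + 2 * (∑ k ∈ (Icc 4 (ℓ-3)).filter (fun k => k % 2 = 0), x k)
        - ∑ k ∈ (Icc 4 (ℓ-3)).filter (fun k => k % 2 = 0), x (k+1) := by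
    rw [← Finset.sum_neg_distrib, Finset.mul_sum, ← Finset.sum_add_distrib,
        ← Finset.sum_sub_distrib]
    refine Finset.sum_congr rfl fun k hk => ?_
    simp only [mem_filter, mem_Icc] at hk
    exact (emid k (by omega) (by omega)).symm
  have hre1 : ∑ k ∈ (Icc 4 (ℓ-3)).filter (fun k => k % 2 = 0), x (k-1)
      = ∑ m ∈ (Icc 3 (ℓ-4)).filter (fun m => m % 2 = 1), x m := by
    refine Finset.sum_nbij' (fun k => k - 1) (fun m => m + 1)
      (by intro a ha; simp only [mem_filter, mem_Icc] at *; omega)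
      (by intro a ha; simp only [mem_filter, mem_Icc] at *; omega)
      (by intro a ha; simp only [mem_filter, mem_Icc] at ha; (try dsimp only); omega)
      (by intro a ha; simp only [mem_filter, mem_Icc] at ha; (try dsimp only); omega)
      (fun a _ => rfl)
  have hre2 : ∑ k ∈ (Icc 4 (ℓ-3)).filter (fun k => k % 2 = 0), x (k+1)
      = ∑ m ∈ (Icc 5 (ℓ-2)).filter (fun m => m % 2 = 1), x m := by
    refine Finset.sum_nbij' (fun k => k + 1) (fun m => m - 1)
      (by intro a ha; simp only [mem_filter, mem_Icc] at *; omega)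
      (by intro a ha; simp only [mem_filter, mem_Icc] at *; omega)
      (by intro a ha; simp only [mem_filter, mem_Icc] at ha; (try dsimp only); omega)
      (by intro a ha; simp only [mem_filter, mem_Icc] at ha; (try dsimp only); omega)
      (fun a _ => rfl)
  have hins1 : ∑ m ∈ (Icc 3 (ℓ-2)).filter (fun m => m % 2 = 1), x m
      = x (ℓ-2) + ∑ m ∈ (Icc 3 (ℓ-4)).filter (fun m => m % 2 = 1), x m := by
    rw [show (Icc 3 (ℓ-2)).filter (fun m => m % 2 = 1)
        = insert (ℓ-2) ((Icc 3 (ℓ-4)).filter (fun m => m % 2 = 1)) from by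
      ext m; simp only [mem_filter, mem_Icc, mem_insert]; omega]
    exact Finset.sum_insert (by simp only [mem_filter, mem_Icc]; omega)
  have hins2 : ∑ m ∈ (Icc 3 (ℓ-2)).filter (fun m => m % 2 = 1), x m
      = x 3 + ∑ m ∈ (Icc 5 (ℓ-2)).filter (fun m => m % 2 = 1), x m := by
    rw [show (Icc 3 (ℓ-2)).filter (fun m => m % 2 = 1)
        = insert 3 ((Icc 5 (ℓ-2)).filter (fun m => m % 2 = 1)) from by
      ext m; simp only [mem_filter, mem_Icc, mem_insert]; omega]
    exact Finset.sum_insert (by simp only [mem_filter, mem_Icc]; omega)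
  refine ⟨x 2 - x 1 + x (ℓ-1) + (∑ k ∈ (Icc 4 (ℓ-3)).filter (fun k => k % 2 = 0), x k)
      - ∑ m ∈ (Icc 3 (ℓ-2)).filter (fun m => m % 2 = 1), x m, ?_⟩
  linear_combination (e1 - e0) - 2*e2 - 2*el1 + 2*hSm - 2*hre1 - 2*hre2 + 2*hins1 + 2*hins2


/-- Stmt 6: In type `D_ℓ^{(1)}` (ℓ ≥ 5 odd), a level-zero vector ψ lies in the ℤ-column-span
of the Cartan matrix iff `ψ_0 - ψ_1 + 2ψ_2 + 2ψ_4 + ⋯ + 2ψ_{ℓ-1} ≡ 0 (mod 4)`. -/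
theorem stmt6 (ℓ : ℕ) (hℓ : 5 ≤ ℓ) (hodd : Odd ℓ)
    (A : Matrix (Fin (ℓ + 1)) (Fin (ℓ + 1)) ℤ)
    (hA : ∀ i j : Fin (ℓ + 1), A i j =
      if i = j then 2
      else if (i.val = 0 ∧ j.val = 2) ∨ (j.val = 0 ∧ i.val = 2)
           ∨ (i.val = 1 ∧ j.val = 2) ∨ (j.val = 1 ∧ i.val = 2)
           ∨ (2 ≤ i.val ∧ i.val + 1 = j.val ∧ j.val ≤ ℓ - 2)
           ∨ (2 ≤ j.val ∧ j.val + 1 = i.val ∧ i.val ≤ ℓ - 2)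
           ∨ (i.val = ℓ - 2 ∧ j.val = ℓ - 1) ∨ (j.val = ℓ - 2 ∧ i.val = ℓ - 1)
           ∨ (i.val = ℓ - 2 ∧ j.val = ℓ) ∨ (j.val = ℓ - 2 ∧ i.val = ℓ) then -1
      else 0)
    (ψ : Fin (ℓ + 1) → ℤ)
    (hψ : ψ 0 + ψ 1
        + 2 * (∑ i ∈ Finset.univ.filter
            (fun i : Fin (ℓ + 1) => 2 ≤ i.val ∧ i.val ≤ ℓ - 2), ψ i)
        + ψ ⟨ℓ - 1, by omega⟩ + ψ (Fin.last ℓ) = 0) :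
    (∃ x : Fin (ℓ + 1) → ℤ, A.mulVec x = ψ) ↔
      4 ∣ (ψ 0 - ψ 1
        + 2 * ∑ i ∈ Finset.univ.filter
            (fun i : Fin (ℓ + 1) => i.val % 2 = 0 ∧ i.val ≠ 0), ψ i) := by
  have h2 : ℓ % 2 = 1 := Nat.odd_iff.mp hodd
  set p : ℕ → ℤ := fun k => if h : k < ℓ + 1 then ψ ⟨k, h⟩ else 0 with hp
  have hpψ : ∀ i : Fin (ℓ+1), ψ i = p i.val := by
    intro i; rw [hp]; simp [i.isLt]
  have hA' : ∀ (i : Fin (ℓ+1)) (j : Fin (ℓ+1)), A i j = Cc ℓ i.val j.val := by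
    intro i j
    rcases eq_or_ne i j with h | h
    · rw [hA, if_pos h]; unfold Cc; rw [if_pos (by rw [h])]
    · rw [hA, if_neg h]; unfold Cc; rw [if_neg (fun hh => h (Fin.ext hh))]
  have hmv : ∀ (v : Fin (ℓ+1) → ℤ) (i : Fin (ℓ+1)),
      A.mulVec v i = ∑ k ∈ range (ℓ+1),
        Cc ℓ i.val k * (fun k => if h : k < ℓ+1 then v ⟨k,h⟩ else 0) k := by
    intro v i
    rw [Matrix.mulVec, dotProduct, ← Fin.sum_univ_eq_sum_range]
    exact Finset.sum_congr rfl fun j _ => by rw [hA']; simp [j.isLt]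
  -- translate the statement sums
  have hψ0 : ψ 0 = p 0 := by rw [hpψ, Fin.val_zero]
  have hψ1 : ψ 1 = p 1 := by
    rw [hpψ, Fin.val_one', Nat.mod_eq_of_lt (by omega)]
  have hψl1 : ψ ⟨ℓ - 1, by omega⟩ = p (ℓ-1) := hpψ _
  have hψl : ψ (Fin.last ℓ) = p ℓ := hpψ _
  have hsum2 : (∑ i ∈ Finset.univ.filter
        (fun i : Fin (ℓ + 1) => 2 ≤ i.val ∧ i.val ≤ ℓ - 2), ψ i)
      = ∑ k ∈ Icc 2 (ℓ-2), p k := by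
    refine Finset.sum_nbij' (fun i : Fin (ℓ+1) => i.val)
      (fun k => (⟨k % (ℓ+1), Nat.mod_lt _ (by omega)⟩ : Fin (ℓ+1))) ?_ ?_ ?_ ?_ ?_
    · intro a ha; simp only [mem_filter, mem_univ, true_and] at ha
      simp only [mem_Icc]; omega
    · intro a ha; simp only [mem_Icc] at ha
      simp only [mem_filter, mem_univ, true_and]
      rw [Nat.mod_eq_of_lt (by omega)]; omega
    · intro a _; exact Fin.ext (Nat.mod_eq_of_lt a.isLt)
    · intro a ha; simp only [mem_Icc] at ha
      exact Nat.mod_eq_of_lt (by omega)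
    · intro a _; exact hpψ a
  have hsum1 : (∑ i ∈ Finset.univ.filter
        (fun i : Fin (ℓ + 1) => i.val % 2 = 0 ∧ i.val ≠ 0), ψ i)
      = ∑ k ∈ (Icc 2 (ℓ-1)).filter (fun k => k % 2 = 0), p k := by
    refine Finset.sum_nbij' (fun i : Fin (ℓ+1) => i.val)
      (fun k => (⟨k % (ℓ+1), Nat.mod_lt _ (by omega)⟩ : Fin (ℓ+1))) ?_ ?_ ?_ ?_ ?_
    · intro a ha; simp only [mem_filter, mem_univ, true_and] at ha
      simp only [mem_filter, mem_Icc]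
      have := a.isLt; omega
    · intro a ha; simp only [mem_filter, mem_Icc] at ha
      simp only [mem_filter, mem_univ, true_and]
      show a % (ℓ+1) % 2 = 0 ∧ a % (ℓ+1) ≠ 0
      rw [Nat.mod_eq_of_lt (show a < ℓ + 1 by omega)]; omega
    · intro a _; exact Fin.ext (Nat.mod_eq_of_lt a.isLt)
    · intro a ha; simp only [mem_filter, mem_Icc] at ha
      exact Nat.mod_eq_of_lt (by omega)
    · intro a _; exact hpψ a
  rw [hψ0, hψ1, hψl1, hψl, hsum2] at hψ
  rw [hψ0, hψ1, hsum1]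
  constructor
  · rintro ⟨x, hx⟩
    have hval : ∀ (i : ℕ) (hi : i < ℓ+1), p i = ∑ k ∈ range (ℓ+1),
        Cc ℓ i k * (fun k => if h : k < ℓ+1 then x ⟨k,h⟩ else 0) k := by
      intro i hi
      have := hmv x ⟨i, hi⟩
      rw [hx] at this
      rw [← this, hpψ]
    refine fwd ℓ hℓ h2 p (fun k => if h : k < ℓ+1 then x ⟨k,h⟩ else 0) ?_ ?_ ?_ ?_ ?_
    · rw [hval 0 (by omega), rs0 ℓ hℓ h2]
    · rw [hval 1 (by omega), rs1 ℓ hℓ h2]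
    · rw [hval 2 (by omega), rs2 ℓ hℓ h2]
    · intro j h3 hl3
      rw [hval j (by omega), rsmid ℓ hℓ h2 _ j h3 hl3]
    · rw [hval (ℓ-1) (by omega), rsl1 ℓ hℓ h2]
  · intro hdvd
    obtain ⟨x, q0, q1, q2, qmid, qm, ql1, ql⟩ := solve ℓ hℓ h2 p hψ hdvd
    refine ⟨fun i => x i.val, ?_⟩
    funext i
    obtain ⟨n, hn⟩ := i
    rw [hmv (fun i => x i.val) ⟨n, hn⟩]
    rw [show (∑ k ∈ range (ℓ+1),
          Cc ℓ n k * (fun k => if h : k < ℓ+1 then x (⟨k,h⟩ : Fin (ℓ+1)).val else 0) k)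
        = ∑ k ∈ range (ℓ+1), Cc ℓ n k * x k from
      Finset.sum_congr rfl fun k hk => by
        simp only [mem_range] at hk; simp [hk]]
    rw [hpψ ⟨n, hn⟩]
    show ∑ k ∈ range (ℓ+1), Cc ℓ n k * x k = p n
    rcases (by omega : n = 0 ∨ n = 1 ∨ n = 2 ∨ (3 ≤ n ∧ n ≤ ℓ-3) ∨ n = ℓ-2 ∨ n = ℓ-1 ∨ n = ℓ)
      with h|h|h|h|h|h|h
    · subst h; rw [rs0 ℓ hℓ h2]; exact q0
    · subst h; rw [rs1 ℓ hℓ h2]; exact q1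
    · subst h; rw [rs2 ℓ hℓ h2]; exact q2
    · rw [rsmid ℓ hℓ h2 x n h.1 h.2]; exact qmid n h.1 h.2
    · rw [h, rsm ℓ hℓ h2]; exact qm
    · rw [h, rsl1 ℓ hℓ h2]; exact ql1
    · rw [h, rsl ℓ hℓ h2]; exact ql
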